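/- Let (G,f) be an n-ary group and a ∈ G a fixed element. Then the set G*_a = G × Z_{n-1} with operation (x,i)·(y,j) = (f_*(x, a^{(i)}, y, a^{(j)}, ā, a^{(n-2-i*j)}), i*j), where i*j ≡ i+j+1 (mod n-1), a^{(t)} denotes a repeated t times, ā is the skew element of a, and f_* means applying f once or twice as needed by the total length, is a group (the Post cover of G). Its identity element is (ā, n-2). -/

import Mathlib

structure PolyadicGroup (n : ℕ) (G : Type*) where
  f : List G → G
  assoc : ∀ u v w u' v' w' : List G,
    v.length = n → v'.length = n →
    u.length + w.length = n - 1 → u'.length + w'.length = n - 1 →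
    u ++ v ++ w = u' ++ v' ++ w' →
    f (u ++ f v :: w) = f (u' ++ f v' :: w')
  solv : ∀ (u w : List G) (b : G), u.length + w.length = n - 1 →
    ∃! z : G, f (u ++ z :: w) = b

noncomputable def PolyadicGroup.skew {n : ℕ} {G : Type*} (P : PolyadicGroup n G)
    (x : G) : G :=
  (P.solv (List.replicate (n - 1) x) [] x (by simp)).choose

def PolyadicGroup.fstar {n : ℕ} {G : Type*} (P : PolyadicGroup n G)
    (l : List G) : G :=
  if l.length = n then P.f l else P.f (P.f (l.take n) :: l.drop n)

namespace PolyadicGroup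

variable {n : ℕ} {G : Type*}

/-- iterated application of `f`, biting `n` elements from the left, `k+1` times total. -/
def go (P : PolyadicGroup n G) : ℕ → List G → G
  | 0, l => P.f l
  | k+1, l => P.go k (P.f (l.take n) :: l.drop n)

theorem go_zero (P : PolyadicGroup n G) (l : List G) : P.go 0 l = P.f l := rfl

theorem go_succ (P : PolyadicGroup n G) (k : ℕ) (l : List G) :
    P.go (k+1) l = P.go k (P.f (l.take n) :: l.drop n) := rfl

theorem fstar_eq_go (P : PolyadicGroup n G) (hn : 2 ≤ n) {d : ℕ} (hd : d ≤ 1)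
    {l : List G} (hl : l.length = n + d * (n-1)) : P.fstar l = P.go d l := by
  interval_cases d
  · have : l.length = n := by omega
    rw [fstar, if_pos this, go_zero]
  · have h1 : l.length ≠ n := by omega
    rw [fstar, if_neg h1, go_succ, go_zero]

theorem skew_spec (P : PolyadicGroup n G) (x : G) :
    P.f (List.replicate (n-1) x ++ [P.skew x]) = x :=
  (P.solv (List.replicate (n - 1) x) [] x (by simp)).choose_spec.1

theorem rep_rep (a : G) {s t r : ℕ} (h : s + t = r) :
    List.replicate s a ++ List.replicate t a = List.replicate r a := by
  subst h; exact (List.replicate_add s t a).symm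

theorem rep_glue (a : G) {s t r : ℕ} (h : s + t = r) (l : List G) :
    List.replicate s a ++ (List.replicate t a ++ l) = List.replicate r a ++ l := by
  rw [← List.append_assoc, rep_rep a h]

theorem val_add_one {m : ℕ} [NeZero m] (i j : ZMod m) :
    (i + j + 1).val = (i.val + j.val + 1) % m := by
  have : (i + j + 1 : ZMod m) = ((i.val + j.val + 1 : ℕ) : ZMod m) := by
    push_cast [ZMod.natCast_val, ZMod.cast_id]
    ring
  rw [this, ZMod.val_natCast]


variable (P : PolyadicGroup n G)

/-- Dörnte: `f(a^t, ab, a^{n-1-t}) = a` for all `t ≤ n-1`. -/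
theorem f_skew (hn : 2 ≤ n) (a : G) {t : ℕ} (ht : t ≤ n - 1) :
    P.f (List.replicate t a ++ P.skew a :: List.replicate (n-1-t) a) = a := by
  set ab := P.skew a with hab
  have h : (n-1-t) + t = n-1 := by omega
  have key := P.assoc (List.replicate (n-1-t) a)
      (List.replicate t a ++ ab :: List.replicate (n-1-t) a) (List.replicate t a)
      [] (List.replicate (n-1) a ++ [ab]) (List.replicate (n-1) a)
      (by simp; omega) (by simp; omega) (by simp; omega) (by simp)
      (by simp only [List.append_assoc, List.cons_append, List.nil_append]
          rw [rep_rep a h, rep_glue a h])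
  rw [skew_spec] at key
  have lid : List.replicate (n-1-t) a ++ a :: List.replicate t a
      = [] ++ a :: List.replicate (n-1) a := by
    rw [List.nil_append,
      show (a :: List.replicate t a) = List.replicate (t+1) a from
        List.replicate_succ.symm,
      show (a :: List.replicate (n-1) a) = List.replicate n a from by
        rw [show n = n-1+1 by omega]; exact List.replicate_succ.symm,
      rep_rep a (show n-1-t + (t+1) = n by omega)]
  exact (P.solv (List.replicate (n-1-t) a) (List.replicate t a)
      (P.f ([] ++ a :: List.replicate (n-1) a)) (by simp; omega)).unique key
      (congrArg P.f lid)

/-- Dörnte: `f(x, a^t, ab, a^{n-2-t}) = x`. -/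
theorem f_one_right (hn : 2 ≤ n) (a : G) {t : ℕ} (ht : t ≤ n - 2) (x : G) :
    P.f (x :: (List.replicate t a ++ P.skew a :: List.replicate (n-2-t) a)) = x := by
  set ab := P.skew a with hab
  obtain ⟨c, hc, -⟩ := P.solv [] (List.replicate (n-1) a) x (by simp)
  rw [List.nil_append] at hc
  have key := P.assoc [] (c :: List.replicate (n-1) a)
      (List.replicate t a ++ ab :: List.replicate (n-2-t) a)
      (c :: List.replicate t a) (List.replicate (n-1) a ++ [ab])
      (List.replicate (n-2-t) a)
      (by simp; omega) (by simp; omega) (by simp; omega) (by simp; omega)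
      (by simp only [List.append_assoc, List.cons_append, List.nil_append,
            List.singleton_append]
          rw [rep_glue a (show (n-1) + t = n-1+t by omega),
            rep_glue a (show t + (n-1) = n-1+t by omega)])
  rw [List.nil_append, hc, skew_spec] at key
  have : (c :: List.replicate t a) ++ a :: List.replicate (n-2-t) a
      = c :: List.replicate (n-1) a := by
    rw [List.cons_append,
      show (a :: List.replicate (n-2-t) a) = List.replicate (n-2-t+1) a from
        List.replicate_succ.symm,
      rep_rep a (show t + (n-2-t+1) = n-1 by omega)]
  rw [this, hc] at key
  exact key

/-- Dörnte: `f(ab, a^{n-2}, x) = x`. -/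
theorem f_one_left (hn : 2 ≤ n) (a : G) (x : G) :
    P.f (P.skew a :: List.replicate (n-2) a ++ [x]) = x := by
  set ab := P.skew a with hab
  obtain ⟨c, hc, -⟩ := P.solv (List.replicate (n-1) a) [] x (by simp)
  have key := P.assoc (ab :: List.replicate (n-2) a)
      (List.replicate (n-1) a ++ [c]) []
      [] (ab :: List.replicate (n-1) a) (List.replicate (n-2) a ++ [c])
      (by simp; omega) (by simp; omega) (by simp; omega) (by simp; omega)
      (by simp only [List.append_assoc, List.cons_append, List.nil_append,
            List.append_nil, List.singleton_append]
          rw [rep_glue a (show (n-2) + (n-1) = n-2+(n-1) by omega),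
            rep_glue a (show (n-1) + (n-2) = n-2+(n-1) by omega)])
  have d0 : P.f (ab :: List.replicate (n-1) a) = a := by
    have := P.f_skew hn a (t := 0) (by omega)
    simpa using this
  rw [hc, d0] at key
  have : ([] : List G) ++ a :: (List.replicate (n-2) a ++ [c])
      = List.replicate (n-1) a ++ [c] := by
    rw [List.nil_append, ← List.cons_append,
      show (a :: List.replicate (n-2) a) = List.replicate (n-1) a from ?_]
    rw [show n-1 = n-2+1 by omega]
    exact List.replicate_succ.symm
  rw [this, hc] at key
  simpa using key

/-- one-step generalized associativity for `go`. -/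
theorem go_assoc_one (hn : 2 ≤ n) :
    ∀ (k : ℕ) (u v w : List G), v.length = n →
    u.length + w.length = (k+1) * (n-1) →
    P.go (k+1) (u ++ v ++ w) = P.go k (u ++ P.f v :: w) := by
  intro k
  induction k with
  | zero =>
    intro u v w hv huw
    rw [go_succ, go_zero, go_zero]
    have e : (0+1) * (n-1) = n-1 := by ring
    have := P.assoc u v w [] ((u++v++w).take n) ((u++v++w).drop n) hv
      (by simp; omega) (by omega)
      (by simp; omega)
      (by rw [List.nil_append, List.take_append_drop])
    rw [List.nil_append] at this
    exact this.symm
  | succ k ih =>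
    intro u v w hv huw
    have e : (k+1+1)*(n-1) = (k+1)*(n-1) + (n-1) := by ring
    by_cases hu : n ≤ u.length
    · have h1 : (u ++ v ++ w).take n = u.take n := by
        rw [List.append_assoc, List.take_append_of_le_length hu]
      have h2 : (u ++ v ++ w).drop n = u.drop n ++ (v ++ w) := by
        rw [List.append_assoc, List.drop_append_of_le_length hu]
      have h3 : (u ++ P.f v :: w).take n = u.take n :=
        List.take_append_of_le_length hu
      have h4 : (u ++ P.f v :: w).drop n = u.drop n ++ (P.f v :: w) :=
        List.drop_append_of_le_length hu
      rw [P.go_succ (k+1) (u ++ v ++ w), h1, h2,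
        P.go_succ k (u ++ P.f v :: w), h3, h4]
      have := ih (P.f (u.take n) :: u.drop n) v w hv (by simp; omega)
      simpa [List.cons_append, List.append_assoc] using this
    · push_neg at hu
      set t := n - u.length with hT
      set w₁ := w.take (n-1-u.length) with hw₁
      set w₂ := w.drop (n-1-u.length) with hw₂
      have hw1len : w₁.length = n-1-u.length := by
        rw [hw₁, List.length_take]; omega
      have hw2len : w₂.length = (k+1)*(n-1) := by
        rw [hw₂, List.length_drop]; omega
      have hAlen : (u ++ v.take t).length = n := by
        simp [List.length_take]; omega
      have hBlen : (v.drop t ++ w₁).length = n - 1 := by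
        simp [List.length_drop]; omega
      have hsplit : w = w₁ ++ w₂ := (List.take_append_drop _ w).symm
      have key := P.assoc u v w₁ [] (u ++ v.take t) (v.drop t ++ w₁) hv hAlen
        (by omega) (by simpa using hBlen)
        (by simp only [List.nil_append, List.append_assoc]
            conv_rhs => rw [← List.append_assoc (v.take t) (v.drop t),
              List.take_append_drop])
      rw [List.nil_append] at key
      have hXeq : u ++ v ++ w = (u ++ v.take t) ++ ((v.drop t ++ w₁) ++ w₂) := by
        rw [hsplit]
        simp only [List.append_assoc]
        conv_rhs => rw [← List.append_assoc (v.take t) (v.drop t),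
          List.take_append_drop]
      have hYeq : u ++ P.f v :: w = (u ++ P.f v :: w₁) ++ w₂ := by
        rw [hsplit]; simp [List.append_assoc]
      have hUlen : (u ++ P.f v :: w₁).length = n := by simp; omega
      rw [hXeq, hYeq,
        P.go_succ (k+1) ((u ++ v.take t) ++ ((v.drop t ++ w₁) ++ w₂)),
        List.take_left' hAlen, List.drop_left' hAlen,
        P.go_succ k ((u ++ P.f v :: w₁) ++ w₂),
        List.take_left' hUlen, List.drop_left' hUlen, key]
      have := ih [] (P.f (u ++ v.take t) :: (v.drop t ++ w₁)) w₂
        (by rw [List.length_cons, hBlen]; omega)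
        (by simpa using hw2len)
      simpa [List.cons_append, List.append_assoc] using this

/-- full generalized associativity for `go`. -/
theorem go_assoc (hn : 2 ≤ n) :
    ∀ (j k : ℕ) (u v w : List G), v.length = n + j * (n-1) →
    u.length + w.length = (k+1) * (n-1) →
    P.go (j + k + 1) (u ++ v ++ w) = P.go k (u ++ P.go j v :: w) := by
  intro j
  induction j with
  | zero =>
    intro k u v w hv huw
    simpa [go_zero] using P.go_assoc_one hn k u v w (by simpa using hv) huw
  | succ j ih =>
    intro k u v w hv huw
    have e1 : (j+1)*(n-1) = j*(n-1) + (n-1) := by ring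
    have e2 : (j+k+1+1)*(n-1) = (k+1)*(n-1) + (j*(n-1) + (n-1)) := by ring
    have hvn : n ≤ v.length := by omega
    have h1 : u ++ v ++ w = u ++ v.take n ++ (v.drop n ++ w) := by
      simp only [List.append_assoc]
      rw [← List.append_assoc (v.take n), List.take_append_drop]
    rw [show j+1+k+1 = (j+k+1)+1 by ring, h1]
    rw [P.go_assoc_one hn (j+k+1) u (v.take n) (v.drop n ++ w)
      (by rw [List.length_take]; omega) (by simp [List.length_drop]; omega)]
    have h2 : u ++ P.f (v.take n) :: (v.drop n ++ w)
        = u ++ (P.f (v.take n) :: v.drop n) ++ w := by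
      simp [List.cons_append, List.append_assoc]
    rw [h2, ih k u (P.f (v.take n) :: v.drop n) w (by simp [List.length_drop]; omega) huw]
    rw [← go_succ]

/-- solvability in the first slot for `go`. -/
theorem go_solv (hn : 2 ≤ n) :
    ∀ (k : ℕ) (w : List G) (b : G), w.length = (k+1)*(n-1) →
    ∃ y, P.go k (y :: w) = b := by
  intro k
  induction k with
  | zero =>
    intro w b hw
    obtain ⟨y, hy, -⟩ := P.solv [] w b (by simp; omega)
    exact ⟨y, by simpa [go_zero] using hy⟩
  | succ k ih =>
    intro w b hw
    have e : (k+1+1)*(n-1) = (n-1) + (k+1)*(n-1) := by ring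
    obtain ⟨c, hc⟩ := ih (w.drop (n-1)) b (by simp [List.length_drop]; omega)
    obtain ⟨y, hy, -⟩ := P.solv [] (w.take (n-1)) c (by simp [List.length_take]; omega)
    rw [List.nil_append] at hy
    refine ⟨y, ?_⟩
    rw [go_succ,
      show (y :: w).take n = y :: w.take (n-1) by
        rw [show n = (n-1)+1 by omega]; exact List.take_succ_cons,
      show (y :: w).drop n = w.drop (n-1) by
        rw [show n = (n-1)+1 by omega]; exact List.drop_succ_cons,
      hy]
    exact hc

end PolyadicGroup

/-- The Post cover multiplication on `G × ℤ_{n-1}`: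
`(x,i)·(y,j) = (f_*(x, a^(i), y, a^(j), ā, a^(n-2-i*j)), i*j)` with
`i*j ≡ i+j+1 (mod n-1)`. -/
noncomputable def postMul {n : ℕ} {G : Type*} (P : PolyadicGroup n G) (a : G)
    (p q : G × ZMod (n - 1)) : G × ZMod (n - 1) :=
  (P.fstar (p.1 :: (List.replicate p.2.val a ++ q.1 ::
      (List.replicate q.2.val a ++ P.skew a ::
        List.replicate (n - 2 - (p.2 + q.2 + 1).val) a))),
    p.2 + q.2 + 1)

namespace PolyadicGroup

variable {n : ℕ} {G : Type*} (P : PolyadicGroup n G)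

theorem post_id (hn : 2 ≤ n) (a : G) (p : G × ZMod (n - 1)) :
    postMul P a (P.skew a, ((n - 2 : ℕ) : ZMod (n - 1))) p = p ∧
    postMul P a p (P.skew a, ((n - 2 : ℕ) : ZMod (n - 1))) = p := by
  haveI : NeZero (n - 1) := ⟨by omega⟩
  obtain ⟨x, i⟩ := p
  have hi : i.val < n - 1 := ZMod.val_lt i
  have hE : ((n - 2 : ℕ) : ZMod (n - 1)).val = n - 2 := by
    rw [ZMod.val_natCast, Nat.mod_eq_of_lt (by omega)]
  have h0 : ((n - 2 : ℕ) : ZMod (n - 1)) + 1 = 0 := by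
    have h1 : ((n - 2 : ℕ) : ZMod (n - 1)) + 1 = ((n - 2 + 1 : ℕ) : ZMod (n - 1)) := by
      push_cast; ring
    rw [h1, show n - 2 + 1 = n - 1 by omega, ZMod.natCast_self]
  constructor
  · -- left identity
    have hsnd : ((n - 2 : ℕ) : ZMod (n - 1)) + i + 1 = i := by
      calc ((n - 2 : ℕ) : ZMod (n - 1)) + i + 1
          = i + (((n - 2 : ℕ) : ZMod (n - 1)) + 1) := by ring
        _ = i := by rw [h0, add_zero]
    simp only [postMul, hsnd, hE]
    have hW : P.skew a :: (List.replicate (n-2) a ++ x ::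
        (List.replicate i.val a ++ P.skew a :: List.replicate (n-2-i.val) a))
        = (P.skew a :: List.replicate (n-2) a ++ [x]) ++
          (List.replicate i.val a ++ P.skew a :: List.replicate (n-2-i.val) a) := by
      simp [List.append_assoc]
    have hlen1 : (P.skew a :: List.replicate (n-2) a ++ [x]).length = n := by
      simp; omega
    have hWne : (P.skew a :: (List.replicate (n-2) a ++ x ::
        (List.replicate i.val a ++ P.skew a :: List.replicate (n-2-i.val) a))).length ≠ n := by
      simp; omega
    rw [fstar, if_neg hWne, hW, List.take_left' hlen1, List.drop_left' hlen1,
      P.f_one_left hn a x, P.f_one_right hn a (by omega : i.val ≤ n - 2) x]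
  · -- right identity
    have hsnd : i + ((n - 2 : ℕ) : ZMod (n - 1)) + 1 = i := by
      calc i + ((n - 2 : ℕ) : ZMod (n - 1)) + 1
          = i + (((n - 2 : ℕ) : ZMod (n - 1)) + 1) := by ring
        _ = i := by rw [h0, add_zero]
    simp only [postMul, hsnd, hE]
    have hrep : List.replicate (n-2) a
        = List.replicate (n-2-i.val) a ++ List.replicate i.val a :=
      (rep_rep a (by omega)).symm
    have hW : x :: (List.replicate i.val a ++ P.skew a ::
        (List.replicate (n-2) a ++ P.skew a :: List.replicate (n-2-i.val) a))
        = (x :: (List.replicate i.val a ++ P.skew a :: List.replicate (n-2-i.val) a)) ++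
          (List.replicate i.val a ++ P.skew a :: List.replicate (n-2-i.val) a) := by
      rw [hrep]; simp [List.append_assoc]
      rw [List.replicate_add, List.append_assoc]
    have hlen1 : (x :: (List.replicate i.val a ++ P.skew a ::
        List.replicate (n-2-i.val) a)).length = n := by simp; omega
    have hWne : (x :: (List.replicate i.val a ++ P.skew a ::
        (List.replicate (n-2) a ++ P.skew a :: List.replicate (n-2-i.val) a))).length ≠ n := by
      simp; omega
    rw [fstar, if_neg hWne, hW, List.take_left' hlen1, List.drop_left' hlen1,
      P.f_one_right hn a (by omega : i.val ≤ n - 2) x,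
      P.f_one_right hn a (by omega : i.val ≤ n - 2) x]

theorem post_inv_left (hn : 2 ≤ n) (a : G) (p : G × ZMod (n - 1)) :
    ∃ q : G × ZMod (n - 1),
      postMul P a q p = (P.skew a, ((n - 2 : ℕ) : ZMod (n - 1))) := by
  haveI : NeZero (n - 1) := ⟨by omega⟩
  obtain ⟨x, i⟩ := p
  have hi : i.val < n - 1 := ZMod.val_lt i
  have hE : ((n - 2 : ℕ) : ZMod (n - 1)).val = n - 2 := by
    rw [ZMod.val_natCast, Nat.mod_eq_of_lt (by omega)]
  have hcast : ((n - 2 : ℕ) : ZMod (n - 1)) = -1 := by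
    have h1 : ((n - 2 : ℕ) : ZMod (n - 1)) + 1 = ((n - 2 + 1 : ℕ) : ZMod (n - 1)) := by
      push_cast; ring
    have h2 : ((n - 2 : ℕ) : ZMod (n - 1)) + 1 = 0 := by
      rw [h1, show n - 2 + 1 = n - 1 by omega, ZMod.natCast_self]
    linear_combination h2
  set j : ZMod (n - 1) := -(i + 2) with hj
  have hjlt : j.val < n - 1 := ZMod.val_lt j
  have hsnd : j + i + 1 = ((n - 2 : ℕ) : ZMod (n - 1)) := by
    rw [hcast, hj]; ring
  have hK : (j + i + 1).val = n - 2 := by rw [hsnd, hE]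
  -- the sum of the vals
  have hval : (j + i + 1).val = (j.val + i.val + 1) % (n - 1) := val_add_one j i
  have hmd := Nat.mod_add_div (j.val + i.val + 1) (n - 1)
  set D := (j.val + i.val + 1) / (n - 1) with hD
  have hDle : D ≤ 1 := by
    rcases Nat.lt_or_ge D 2 with h | h
    · omega
    · have : (n - 1) * 2 ≤ (n - 1) * D := Nat.mul_le_mul_left _ h
      omega
  have hmod : (j.val + i.val + 1) % (n - 1) = n - 2 := by rw [← hval, hK]
  -- the tail word
  set w0 : List G := List.replicate j.val a ++ x ::
    (List.replicate i.val a ++ P.skew a :: List.replicate (n - 2 - (n - 2)) a) with hw0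
  have hw0len : w0.length = (D + 1) * (n - 1) := by
    have e : (D + 1) * (n - 1) = (n - 1) * D + (n - 1) := by ring
    simp [hw0]; omega
  obtain ⟨y, hy⟩ := P.go_solv hn D w0 (P.skew a) hw0len
  refine ⟨(y, j), ?_⟩
  simp only [postMul, hK]
  have hlen : (y :: w0).length = n + D * (n - 1) := by
    have e : D * (n - 1) = (n - 1) * D := by ring
    simp [hw0]; omega
  rw [P.fstar_eq_go hn hDle hlen, hy, hsnd]

set_option maxHeartbeats 2000000 in
theorem post_assoc (hn : 2 ≤ n) (a : G) (p q r : G × ZMod (n - 1)) :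
    postMul P a (postMul P a p q) r = postMul P a p (postMul P a q r) := by
  haveI : NeZero (n - 1) := ⟨by omega⟩
  obtain ⟨x, pi⟩ := p
  obtain ⟨y, qi⟩ := q
  obtain ⟨z, ri⟩ := r
  have hsnd : pi + qi + 1 + ri + 1 = pi + (qi + ri + 1) + 1 := by ring
  have hA := val_add_one (pi + qi + 1) ri
  rw [val_add_one pi qi] at hA
  have hB := val_add_one pi (qi + ri + 1)
  rw [val_add_one qi ri] at hB
  have hAB : (pi.val + (qi.val + ri.val + 1) % (n-1) + 1) % (n-1)
      = ((pi.val + qi.val + 1) % (n-1) + ri.val + 1) % (n-1) := by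
    rw [← hA, ← hB, hsnd]
  simp only [postMul]
  rw [hsnd, hB, hAB, val_add_one pi qi, val_add_one qi ri]
  rw [Prod.mk.injEq]
  refine ⟨?_, rfl⟩
  -- abbreviations
  have hi : pi.val < n - 1 := ZMod.val_lt pi
  have hj : qi.val < n - 1 := ZMod.val_lt qi
  have hl : ri.val < n - 1 := ZMod.val_lt ri
  set i := pi.val with hidef
  set j := qi.val with hjdef
  set l := ri.val with hldef
  set K1 := (i + j + 1) % (n-1) with hK1d
  set S := (j + l + 1) % (n-1) with hSd
  set K2 := (K1 + l + 1) % (n-1) with hK2d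
  set d1 := (i + j + 1) / (n-1) with hd1d
  set dL := (K1 + l + 1) / (n-1) with hdLd
  set d2 := (j + l + 1) / (n-1) with hd2d
  set dR := (i + S + 1) / (n-1) with hdRd
  have hvalK2' : (i + S + 1) % (n-1) = K2 := hAB
  have hm1 : K1 + (n-1) * d1 = i + j + 1 := by
    rw [hK1d, hd1d]; exact Nat.mod_add_div _ _
  have hm2 : K2 + (n-1) * dL = K1 + l + 1 := by
    rw [hK2d, hdLd]; exact Nat.mod_add_div _ _
  have hm3 : S + (n-1) * d2 = j + l + 1 := by
    rw [hSd, hd2d]; exact Nat.mod_add_div _ _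
  have hm4 : K2 + (n-1) * dR = i + S + 1 := by
    rw [← hvalK2', hdRd]; exact Nat.mod_add_div _ _
  have hc1 : d1 * (n-1) = (n-1) * d1 := Nat.mul_comm _ _
  have hc2 : dL * (n-1) = (n-1) * dL := Nat.mul_comm _ _
  have hc3 : d2 * (n-1) = (n-1) * d2 := Nat.mul_comm _ _
  have hc4 : dR * (n-1) = (n-1) * dR := Nat.mul_comm _ _
  have hK1lt : K1 < n-1 := by rw [hK1d]; exact Nat.mod_lt _ (by omega)
  have hSlt : S < n-1 := by rw [hSd]; exact Nat.mod_lt _ (by omega)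
  have hK2lt : K2 < n-1 := by rw [hK2d]; exact Nat.mod_lt _ (by omega)
  have hd1le : d1 ≤ 1 := by
    rcases Nat.lt_or_ge d1 2 with h | h
    · omega
    · have h2 := Nat.mul_le_mul_left (n-1) h; omega
  have hdLle : dL ≤ 1 := by
    rcases Nat.lt_or_ge dL 2 with h | h
    · omega
    · have h2 := Nat.mul_le_mul_left (n-1) h; omega
  have hd2le : d2 ≤ 1 := by
    rcases Nat.lt_or_ge d2 2 with h | h
    · omega
    · have h2 := Nat.mul_le_mul_left (n-1) h; omega
  have hdRle : dR ≤ 1 := by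
    rcases Nat.lt_or_ge dR 2 with h | h
    · omega
    · have h2 := Nat.mul_le_mul_left (n-1) h; omega
  have hdsum : d1 + dL = d2 + dR := by
    have h1 : (n-1) * (d1 + dL) = (n-1) * (d2 + dR) := by
      have e1 : (n-1)*(d1+dL) = (n-1)*d1 + (n-1)*dL := by ring
      have e2 : (n-1)*(d2+dR) = (n-1)*d2 + (n-1)*dR := by ring
      omega
    exact Nat.eq_of_mul_eq_mul_left (by omega) h1
  -- words
  set W1 : List G := x :: (List.replicate i a ++ y ::
    (List.replicate j a ++ P.skew a :: List.replicate (n - 2 - K1) a)) with hW1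
  set tailL : List G := List.replicate K1 a ++ z ::
    (List.replicate l a ++ P.skew a :: List.replicate (n - 2 - K2) a) with htailL
  set W2 : List G := y :: (List.replicate j a ++ z ::
    (List.replicate l a ++ P.skew a :: List.replicate (n - 2 - S) a)) with hW2
  set tailR : List G := List.replicate S a ++ P.skew a ::
    List.replicate (n - 2 - K2) a with htailR
  have hW1len : W1.length = n + d1 * (n-1) := by
    rw [hW1]; simp
    have := Nat.mul_comm d1 (n-1); omega
  have hW2len : W2.length = n + d2 * (n-1) := by
    rw [hW2]; simp
    have := Nat.mul_comm d2 (n-1); omega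
  have hWLlen : (P.go d1 W1 :: tailL).length = n + dL * (n-1) := by
    rw [htailL]; simp
    have := Nat.mul_comm dL (n-1); omega
  have hWRlen : (x :: (List.replicate i a ++ P.go d2 W2 :: tailR)).length
      = n + dR * (n-1) := by
    rw [htailR]; simp
    have := Nat.mul_comm dR (n-1); omega
  rw [P.fstar_eq_go hn hd1le hW1len, P.fstar_eq_go hn hdLle hWLlen,
    P.fstar_eq_go hn hd2le hW2len, P.fstar_eq_go hn hdRle hWRlen]
  -- flatten both sides
  have stepL : P.go dL (P.go d1 W1 :: tailL) = P.go (d1 + dL + 1) (W1 ++ tailL) := by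
    have h := P.go_assoc hn d1 dL [] W1 tailL hW1len
      (by rw [htailL]; simp
          have e : (dL+1)*(n-1) = (n-1)*dL + (n-1) := by ring
          omega)
    simpa using h.symm
  have stepR : P.go dR (x :: (List.replicate i a ++ P.go d2 W2 :: tailR))
      = P.go (d2 + dR + 1) ((x :: List.replicate i a) ++ W2 ++ tailR) := by
    have h := P.go_assoc hn d2 dR (x :: List.replicate i a) W2 tailR hW2len
      (by rw [htailR]; simp
          have e : (dR+1)*(n-1) = (n-1)*dR + (n-1) := by ring
          omega)
    simpa [List.cons_append, List.append_assoc] using h.symm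
  rw [stepL, stepR]
  -- regroup the left word
  have hwordL : W1 ++ tailL = (x :: List.replicate i a) ++
      (y :: (List.replicate j a ++ P.skew a :: List.replicate (n-2-j) a)) ++
      (List.replicate j a ++ z ::
        (List.replicate l a ++ P.skew a :: List.replicate (n-2-K2) a)) := by
    rw [hW1, htailL]
    simp only [List.cons_append, List.append_assoc, List.nil_append]
    rw [rep_glue a (show n-2-K1 + K1 = n-2 by omega),
      rep_glue a (show n-2-j + j = n-2 by omega)]
  have hwordR : (x :: List.replicate i a) ++ W2 ++ tailR =
      ((x :: List.replicate i a) ++ (y :: List.replicate j a)) ++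
      (z :: (List.replicate l a ++ P.skew a :: List.replicate (n-2-l) a)) ++
      (List.replicate l a ++ P.skew a :: List.replicate (n-2-K2) a) := by
    rw [hW2, htailR]
    simp only [List.cons_append, List.append_assoc, List.nil_append]
    rw [rep_glue a (show n-2-S + S = n-2 by omega),
      rep_glue a (show n-2-l + l = n-2 by omega)]
  have stepL2 := P.go_assoc_one hn (d1 + dL) (x :: List.replicate i a)
    (y :: (List.replicate j a ++ P.skew a :: List.replicate (n-2-j) a))
    (List.replicate j a ++ z ::
      (List.replicate l a ++ P.skew a :: List.replicate (n-2-K2) a))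
    (by simp; omega)
    (by simp
        have e : (d1+dL+1)*(n-1) = (n-1)*d1 + (n-1)*dL + (n-1) := by ring
        omega)
  have stepR2 := P.go_assoc_one hn (d2 + dR)
    ((x :: List.replicate i a) ++ (y :: List.replicate j a))
    (z :: (List.replicate l a ++ P.skew a :: List.replicate (n-2-l) a))
    (List.replicate l a ++ P.skew a :: List.replicate (n-2-K2) a)
    (by simp; omega)
    (by simp
        have e : (d2+dR+1)*(n-1) = (n-1)*d2 + (n-1)*dR + (n-1) := by ring
        omega)
  rw [hwordL, stepL2, P.f_one_right hn a (show j ≤ n-2 by omega) y,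
    hwordR, stepR2, P.f_one_right hn a (show l ≤ n-2 by omega) z, hdsum]
  congr 1
  simp [List.cons_append, List.append_assoc]

end PolyadicGroup

/-- Post's cover `G*_a = G × ℤ_{n-1}` with `postMul` is a group with
identity `(ā, n-2)`. -/
theorem post_cover_is_group {n : ℕ} {G : Type*} (hn : 2 ≤ n)
    (P : PolyadicGroup n G) (a : G) :
    (∀ p q r : G × ZMod (n - 1),
        postMul P a (postMul P a p q) r = postMul P a p (postMul P a q r)) ∧
    (∀ p : G × ZMod (n - 1),
        postMul P a (P.skew a, ((n - 2 : ℕ) : ZMod (n - 1))) p = p ∧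
        postMul P a p (P.skew a, ((n - 2 : ℕ) : ZMod (n - 1))) = p) ∧
    (∀ p : G × ZMod (n - 1), ∃ q : G × ZMod (n - 1),
        postMul P a q p = (P.skew a, ((n - 2 : ℕ) : ZMod (n - 1))) ∧
        postMul P a p q = (P.skew a, ((n - 2 : ℕ) : ZMod (n - 1)))) := by
  refine ⟨P.post_assoc hn a, P.post_id hn a, fun p => ?_⟩
  obtain ⟨q, hq⟩ := P.post_inv_left hn a p
  obtain ⟨r, hr⟩ := P.post_inv_left hn a q
  refine ⟨q, hq, ?_⟩
  calc postMul P a p q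
      = postMul P a (postMul P a (P.skew a, ((n - 2 : ℕ) : ZMod (n - 1))) p) q := by
        rw [(P.post_id hn a p).1]
    _ = postMul P a (postMul P a (postMul P a r q) p) q := by rw [hr]
    _ = postMul P a (postMul P a r (postMul P a q p)) q := by
        rw [P.post_assoc hn a r q p]
    _ = postMul P a (postMul P a r (P.skew a, ((n - 2 : ℕ) : ZMod (n - 1)))) q := by
        rw [hq]
    _ = postMul P a r (postMul P a (P.skew a, ((n - 2 : ℕ) : ZMod (n - 1))) q) := by
        rw [P.post_assoc hn a]
    _ = postMul P a r q := by rw [(P.post_id hn a q).1]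
    _ = (P.skew a, ((n - 2 : ℕ) : ZMod (n - 1))) := hr
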